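/- Let n be an odd positive integer and let Ω be a nonzero n×n real skew-symmetric matrix (Ωᵀ = −Ω). Set H = Ω·Ωᵀ. Then tr(H³) − (1/2 + 2/n)·tr(H)·tr(H²) + (1/(2n) + 1/n²)·(tr H)³ < 0 (strict inequality). -/

import Mathlib

open Matrix Finset


lemma keyG7 (N m r : ℝ) (hN : 7 ≤ N) (hm : 0 < m) (hr : 0 ≤ r) :
    -8*(N-2)*(N-3)*m^3 - 2*(N^3-5*N^2-6*N+36)*m^2*r + (6*N^2-14*N-36)*m*r^2 - (5*N+6)*r^3 < 0 := by
  have hs : (0:ℝ) ≤ N - 7 := by linarith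
  have h6 : (0:ℝ) ≤ 4*N^4+16*N^3-244*N^2+144*N+432 := by
    nlinarith [sq_nonneg (N-7), mul_nonneg (mul_nonneg hs hs) hs, mul_nonneg (mul_nonneg hs hs) (mul_nonneg hs hs)]
  nlinarith [mul_pos (show (0:ℝ) < (20*N+24)*(8*(N-2)*(N-3)) by nlinarith) (mul_pos (mul_pos hm hm) hm),
    mul_nonneg hr (sq_nonneg (2*(5*N+6)*r - (6*N^2-14*N-36)*m)),
    mul_nonneg (mul_nonneg (mul_nonneg hm.le hm.le) hr) h6]

lemma keyG5 (m r : ℝ) (hm : 0 < m) (hr : 0 ≤ r) :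
    -8*3*2*m^3 - 2*(6:ℝ)*m^2*r + 44*m*r^2 - 31*r^3 < 0 := by
  nlinarith [mul_pos (mul_pos hm hm) hm, mul_nonneg hr (sq_nonneg (31*r - 22*m)), mul_nonneg hm.le (sq_nonneg (r - m)), mul_nonneg hr (sq_nonneg (r-m)), mul_nonneg hr (sq_nonneg (2*r-m))]

lemma scalarE (N m r1 r2 r3 : ℝ) (hN : N = 3 ∨ N = 5 ∨ 7 ≤ N) (hm : 0 < m)
    (h1 : 0 ≤ r1) (h2 : 0 ≤ r2) (h3 : 0 ≤ r3)
    (c1 : r1 ^ 2 ≤ (N - 3) * r2) (c2 : r3 ≤ m * r2) (c3 : r2 ≤ m * r1) :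
    2*N^2*(2*m^3+r3) - N*(N+4)*(2*m+r1)*(2*m^2+r2) + (N+2)*(2*m+r1)^3 < 0 := by
  have hm3 : 0 < m^3 := by positivity
  rcases hN with h | h | h
  · subst h
    have e1 : r1 = 0 := by nlinarith
    have e2 : r2 = 0 := by nlinarith
    have e3 : r3 = 0 := by nlinarith
    subst e1; subst e2; subst e3; nlinarith
  · subst h
    have hG := keyG5 m r1 hm h1
    have p1 : 0 ≤ (8*5*m + 5*(5+4)*r1) * ((5 - 3) * r2 - r1^2) := by
      apply mul_nonneg <;> nlinarith
    nlinarith [hG, p1, c2]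
  · have hG := keyG7 N m r1 h hm h1
    have hB : (0:ℝ) ≤ 8*N*m + N*(N+4)*r1 := by nlinarith
    have p1 : 0 ≤ (8*N*m + N*(N+4)*r1) * ((N - 3) * r2 - r1^2) :=
      mul_nonneg hB (by linarith)
    have p2 : 0 ≤ ((N-3)*(2*N^2)) * (m * r2 - r3) := by
      apply mul_nonneg (by nlinarith) (by linarith)
    have hN3 : (0:ℝ) ≤ N - 3 := by linarith
    nlinarith [hG, p1, p2, hN3]

lemma divstep (N M R1 R2 R3 : ℝ) (hN : 0 < N)
    (hE : 2*N^2*(2*M^3+R3) - N*(N+4)*(2*M+R1)*(2*M^2+R2) + (N+2)*(2*M+R1)^3 < 0) :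
    (2*M^3+R3) - (1/2 + 2/N)*(2*M+R1)*(2*M^2+R2) + (1/(2*N) + 1/N^2)*(2*M+R1)^3 < 0 := by
  have key2 : (2*M^3+R3) - (1/2 + 2/N)*(2*M+R1)*(2*M^2+R2) + (1/(2*N) + 1/N^2)*(2*M+R1)^3
      = (2*N^2*(2*M^3+R3) - N*(N+4)*(2*M+R1)*(2*M^2+R2) + (N+2)*(2*M+R1)^3) / (2*N^2) := by
    field_simp
    ring
  rw [key2]
  exact div_neg_of_neg_of_pos hE (by positivity)

theorem stmt_7 (n : ℕ) (hn : 0 < n) (hno : Odd n)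
    (Ω : Matrix (Fin n) (Fin n) ℝ) (hΩ : Ω ≠ 0) (hskew : Ωᵀ = -Ω) :
    (Ω * Ωᵀ * (Ω * Ωᵀ) * (Ω * Ωᵀ)).trace
      - (1 / 2 + 2 / (n : ℝ)) * (Ω * Ωᵀ).trace * (Ω * Ωᵀ * (Ω * Ωᵀ)).trace
      + (1 / (2 * (n : ℝ)) + 1 / (n : ℝ) ^ 2) * (Ω * Ωᵀ).trace ^ 3 < 0 := by

  classical
  have hΩH : Ωᴴ = Ωᵀ := by ext i j; simp [conjTranspose_apply]
  set H : Matrix (Fin n) (Fin n) ℝ := Ω * Ωᵀ with hHdef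
  have hH : H.IsHermitian := by rw [hHdef, ← hΩH]; exact isHermitian_mul_conjTranspose_self Ω
  have hPSD : H.PosSemidef := by rw [hHdef, ← hΩH]; exact posSemidef_self_mul_conjTranspose Ω
  have hlam0 : ∀ i, 0 ≤ hH.eigenvalues i := hPSD.eigenvalues_nonneg
  set lam : Fin n → ℝ := hH.eigenvalues with hlamdef
  set U : Matrix (Fin n) (Fin n) ℝ := (hH.eigenvectorUnitary : Matrix (Fin n) (Fin n) ℝ) with hUdef
  have hU2 : star U * U = 1 := by
    exact (Matrix.mem_unitaryGroup_iff').mp hH.eigenvectorUnitary.2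
  have hDiag : Matrix.diagonal ((RCLike.ofReal : ℝ → ℝ) ∘ lam) = Matrix.diagonal lam := by
    congr 1
  have hspec : H = U * Matrix.diagonal lam * star U := by
    rw [← hDiag]; exact hH.spectral_theorem
  have key : ∀ E : Matrix (Fin n) (Fin n) ℝ, (U * E * star U).trace = E.trace := by
    intro E
    rw [trace_mul_comm, ← Matrix.mul_assoc, hU2, Matrix.one_mul]
  have cancel : ∀ E F : Matrix (Fin n) (Fin n) ℝ,
      (U * E * star U) * (U * F * star U) = U * (E * F) * star U := by
    intro E F
    calc (U * E * star U) * (U * F * star U) = U * E * (star U * U) * F * star U := by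
            simp only [Matrix.mul_assoc]
      _ = U * (E * F) * star U := by rw [hU2]; simp only [Matrix.mul_one, Matrix.mul_assoc]
  have htr1 : H.trace = ∑ i, lam i := by
    rw [hspec, key, trace_diagonal]
  have htr2 : (H * H).trace = ∑ i, lam i ^ 2 := by
    rw [hspec, cancel, key, diagonal_mul_diagonal, trace_diagonal]
    exact Finset.sum_congr rfl fun i _ => (sq (lam i)).symm ▸ rfl
  have htr3 : (H * H * H).trace = ∑ i, lam i ^ 3 := by
    rw [hspec, cancel, cancel, key, diagonal_mul_diagonal, diagonal_mul_diagonal, trace_diagonal]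
    refine Finset.sum_congr rfl fun i _ => by ring
  -- positivity of trace
  have htrH : H.trace = ∑ i, ∑ j, (Ω i j)^2 := by
    simp [hHdef, Matrix.trace, Matrix.diag, Matrix.mul_apply, Matrix.transpose_apply, sq]
  have hS1pos : 0 < H.trace := by
    obtain ⟨i, j, hij⟩ : ∃ i j, Ω i j ≠ 0 := by
      by_contra hcon; push_neg at hcon
      exact hΩ (by ext i j; exact hcon i j)
    rw [htrH]
    refine Finset.sum_pos' (fun i _ => Finset.sum_nonneg fun j _ => sq_nonneg _)
      ⟨i, Finset.mem_univ i, Finset.sum_pos' (fun j _ => sq_nonneg _)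
        ⟨j, Finset.mem_univ j, by positivity⟩⟩
  -- max eigenvalue
  obtain ⟨i0, -, hmax⟩ := Finset.exists_max_image (Finset.univ : Finset (Fin n)) lam
    ⟨⟨0, hn⟩, Finset.mem_univ _⟩
  set m : ℝ := lam i0 with hmdef
  have hm : 0 < m := by
    rcases lt_or_ge 0 m with h | h
    · exact h
    · exfalso
      have hz : ∀ i, lam i = 0 := fun i =>
        le_antisymm (le_trans (hmax i (Finset.mem_univ i)) h) (hlam0 i)
      rw [htr1] at hS1pos
      simp [hz] at hS1pos
  -- eigenvector machinery
  have hHsymm : Hᵀ = H := by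
    have := hH
    rwa [Matrix.IsHermitian, show Hᴴ = Hᵀ by ext i j; simp [conjTranspose_apply]] at this
  have hΩΩ : Ωᵀ * Ω = H := by rw [hHdef, hskew]; simp [Matrix.neg_mul, Matrix.mul_neg]
  have hcomm : H * Ω = Ω * H := by
    rw [hHdef, Matrix.mul_assoc, hΩΩ, hHdef]
  set v : Fin n → ℝ := ⇑(hH.eigenvectorBasis i0) with hvdef
  have hHv : H *ᵥ v = m • v := hH.mulVec_eigenvectorBasis i0
  set w : Fin n → ℝ := Ω *ᵥ v with hwdef
  have hHw : H *ᵥ w = m • w := by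
    rw [hwdef, Matrix.mulVec_mulVec, hcomm, ← Matrix.mulVec_mulVec, hHv, Matrix.mulVec_smul]
  have hdot : ∀ x y : EuclideanSpace ℝ (Fin n), (inner ℝ x y : ℝ) = ⇑x ⬝ᵥ ⇑y := by
    intro x y
    simp [PiLp.inner_apply, dotProduct, RCLike.inner_apply, mul_comm]
  have hvv : v ⬝ᵥ v = 1 := by
    have h2 := orthonormal_iff_ite.mp hH.eigenvectorBasis.orthonormal i0 i0
    rw [hdot] at h2
    simpa using h2
  have hvw : v ⬝ᵥ w = 0 := by
    have e1 : v ⬝ᵥ w = Matrix.vecMul v Ω ⬝ᵥ v := Matrix.dotProduct_mulVec v Ω v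
    have e2 : Matrix.vecMul v Ω = Ωᵀ *ᵥ v := by
      rw [← Matrix.transpose_transpose Ω, Matrix.vecMul_transpose, Matrix.transpose_transpose]
    rw [e2, hskew, Matrix.neg_mulVec] at e1
    have e3 : (-(Ω *ᵥ v)) ⬝ᵥ v = -(v ⬝ᵥ (Ω *ᵥ v)) := by
      rw [neg_dotProduct, dotProduct_comm]
    rw [e3] at e1
    have : v ⬝ᵥ w = -(v ⬝ᵥ w) := e1
    linarith
  have hww : w ⬝ᵥ w = m := by
    have e1 : w ⬝ᵥ w = Matrix.vecMul w Ω ⬝ᵥ v := Matrix.dotProduct_mulVec w Ω v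
    have e2 : Matrix.vecMul w Ω = Ωᵀ *ᵥ w := by
      rw [← Matrix.transpose_transpose Ω, Matrix.vecMul_transpose, Matrix.transpose_transpose]
    have e3 : Ωᵀ *ᵥ w = H *ᵥ v := by rw [hwdef, Matrix.mulVec_mulVec, hΩΩ]
    rw [e1, e2, e3, hHv, smul_dotProduct, hvv]
    simp
  -- second index with eigenvalue m
  have hexj : ∃ j, j ≠ i0 ∧ lam j = m := by
    by_contra hcon
    push_neg at hcon
    have hcoef : ∀ j, ⇑(hH.eigenvectorBasis j) ⬝ᵥ w = 0 := by
      intro j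
      rcases eq_or_ne j i0 with rfl | hne
      · exact hvw
      · have e1 : ⇑(hH.eigenvectorBasis j) ⬝ᵥ (H *ᵥ w)
            = m * (⇑(hH.eigenvectorBasis j) ⬝ᵥ w) := by
          rw [hHw, dotProduct_smul]; simp
        have e2 : ⇑(hH.eigenvectorBasis j) ⬝ᵥ (H *ᵥ w)
            = lam j * (⇑(hH.eigenvectorBasis j) ⬝ᵥ w) := by
          rw [Matrix.dotProduct_mulVec]
          have hv2 : Matrix.vecMul ⇑(hH.eigenvectorBasis j) H = lam j • ⇑(hH.eigenvectorBasis j) := by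
            have hvt : ⇑(hH.eigenvectorBasis j) ᵥ* Hᵀ = H *ᵥ ⇑(hH.eigenvectorBasis j) :=
              Matrix.vecMul_transpose H ⇑(hH.eigenvectorBasis j)
            rw [hHsymm] at hvt
            rw [hvt]
            exact hH.mulVec_eigenvectorBasis j
          rw [hv2, smul_dotProduct]; simp
        have := hcon j hne
        have h3 : (lam j - m) * (⇑(hH.eigenvectorBasis j) ⬝ᵥ w) = 0 := by
          rw [sub_mul, ← e2, ← e1]; ring
        rcases mul_eq_zero.mp h3 with h | h
        · exact absurd (by linarith : lam j = m) this
        · exact h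
    have hwzero : w = 0 := by
      have hWrepr : ∀ j, (inner ℝ (hH.eigenvectorBasis j) ((WithLp.equiv 2 _).symm w) : ℝ) = 0 := by
        intro j
        rw [hdot]
        exact hcoef j
      have := hH.eigenvectorBasis.sum_repr' ((WithLp.equiv 2 (Fin n → ℝ)).symm w)
      rw [Finset.sum_congr rfl (fun j _ => by rw [hWrepr j, zero_smul])] at this
      have h0 : ((WithLp.equiv 2 (Fin n → ℝ)).symm w) = 0 := by
        rw [← this]; simp
      have := congrArg (WithLp.equiv 2 (Fin n → ℝ)) h0
      simpa using this
    rw [hwzero] at hww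
    simp at hww
    exact hm.ne (by rw [hww])
  obtain ⟨j0, hj0ne, hj0⟩ := hexj
  -- zero eigenvalue
  have hdetΩ : Ω.det = 0 := by
    have h1 : Ω.det = Ωᵀ.det := (Matrix.det_transpose Ω).symm
    rw [hskew, Matrix.det_neg, Fintype.card_fin, hno.neg_one_pow] at h1
    linarith
  have hdetH : H.det = 0 := by rw [hHdef, Matrix.det_mul, hdetΩ, zero_mul]
  have hprod : ∏ i, lam i = 0 := by
    have h2 := hH.det_eq_prod_eigenvalues
    rw [hdetH] at h2
    exact_mod_cast h2.symm
  obtain ⟨k, -, hk⟩ := Finset.prod_eq_zero_iff.mp hprod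
  have hki0 : k ≠ i0 := by intro h; rw [h] at hk; rw [← hmdef] at hk; linarith
  have hkj0 : k ≠ j0 := by intro h; rw [h, hj0] at hk; linarith
  -- assemble sums
  set T : Finset (Fin n) := Finset.univ \ {i0, j0, k} with hTdef
  have hi0jk : i0 ∉ ({j0, k} : Finset (Fin n)) := by
    simp only [Finset.mem_insert, Finset.mem_singleton]
    push_neg
    exact ⟨Ne.symm hj0ne, Ne.symm hki0⟩
  have hj0k : j0 ∉ ({k} : Finset (Fin n)) := by
    simp only [Finset.mem_singleton]
    exact Ne.symm hkj0
  have htriple : ({i0, j0, k} : Finset (Fin n)).card = 3 := by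
    rw [Finset.card_insert_of_notMem hi0jk, Finset.card_insert_of_notMem hj0k,
      Finset.card_singleton]
  have hn3 : 3 ≤ n := by
    calc 3 = ({i0, j0, k} : Finset (Fin n)).card := htriple.symm
      _ ≤ Fintype.card (Fin n) := Finset.card_le_univ _
      _ = n := Fintype.card_fin n
  have hTcard : (T.card : ℝ) = (n : ℝ) - 3 := by
    rw [hTdef, Finset.card_sdiff_of_subset (Finset.subset_univ _), htriple, Finset.card_univ,
      Fintype.card_fin, Nat.cast_sub hn3]
    norm_num
  have hsplit : ∀ g : Fin n → ℝ, ∑ i, g i = g i0 + g j0 + g k + ∑ i ∈ T, g i := by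
    intro g
    rw [← Finset.sum_sdiff (Finset.subset_univ ({i0, j0, k} : Finset (Fin n)))]
    rw [Finset.sum_insert hi0jk, Finset.sum_insert hj0k, Finset.sum_singleton]
    ring
  set r1 : ℝ := ∑ i ∈ T, lam i with hr1def
  set r2 : ℝ := ∑ i ∈ T, lam i ^ 2 with hr2def
  set r3 : ℝ := ∑ i ∈ T, lam i ^ 3 with hr3def
  have hr1 : 0 ≤ r1 := Finset.sum_nonneg fun i _ => hlam0 i
  have hr2 : 0 ≤ r2 := Finset.sum_nonneg fun i _ => by positivity
  have hr3 : 0 ≤ r3 := Finset.sum_nonneg fun i _ => by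
    have := hlam0 i; positivity
  have c2 : r3 ≤ m * r2 := by
    rw [hr3def, hr2def, Finset.mul_sum]
    refine Finset.sum_le_sum fun i _ => ?_
    have h1 := hlam0 i
    have h2 := hmax i (Finset.mem_univ i)
    nlinarith [sq_nonneg (lam i)]
  have c3 : r2 ≤ m * r1 := by
    rw [hr2def, hr1def, Finset.mul_sum]
    refine Finset.sum_le_sum fun i _ => ?_
    have h1 := hlam0 i
    have h2 := hmax i (Finset.mem_univ i)
    nlinarith
  have c1 : r1 ^ 2 ≤ ((n : ℝ) - 3) * r2 := by
    have hcs := sq_sum_le_card_mul_sum_sq (s := T) (f := lam)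
    rw [hTcard] at hcs
    exact hcs
  have hOdd35 : (n : ℝ) = 3 ∨ (n : ℝ) = 5 ∨ 7 ≤ (n : ℝ) := by
    have hmod := Nat.odd_iff.mp hno
    have hcase : n = 3 ∨ n = 5 ∨ 7 ≤ n := by omega
    rcases hcase with h | h | h
    · left; rw [h]; norm_num
    · right; left; rw [h]; norm_num
    · right; right; exact_mod_cast h
  have hE := scalarE (n : ℝ) m r1 r2 r3 hOdd35 hm hr1 hr2 hr3 c1 c2 c3
  have hS1 : H.trace = 2 * m + r1 := by
    rw [htr1, hsplit lam, ← hmdef, hj0, hk]; ring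
  have hS2 : (H * H).trace = 2 * m ^ 2 + r2 := by
    rw [htr2, hsplit (fun i => lam i ^ 2)]
    simp only [← hmdef, hj0, hk]
    rw [← hr2def]; ring
  have hS3 : (H * H * H).trace = 2 * m ^ 3 + r3 := by
    rw [htr3, hsplit (fun i => lam i ^ 3)]
    simp only [← hmdef, hj0, hk]
    rw [← hr3def]; ring
  rw [hS3, hS1, hS2]
  have hNpos : (0 : ℝ) < (n : ℝ) := by exact_mod_cast hn
  exact divstep (n : ℝ) m r1 r2 r3 hNpos hE
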